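/- The conditional density of (U',V') given (U,V), where (U',V',W') = φ(U,V,W) with W ∼ 1/Beta(γ,β) - 1 independent of (U,V), is given by P((U',V')|(U,V)) = [Γ(γ+β)/(Γ(γ)Γ(β))] · V·(-(U-VU')/(VU'+V))^β · ((U+V)/(VU'+V))^γ / (VU'-U) · δ(V' - U'V/U), supported on U > 0, V > 1. -/

import Mathlib

open MeasureTheory ProbabilityTheory Real
open scoped ENNReal

noncomputable def invBetaShiftDensity (a b : ℝ) (w : ℝ) : ℝ :=
  if 0 < w then
    Gamma (a + b) / (Gamma a * Gamma b) * (1 - 1 / (w + 1)) ^ (b - 1) * (1 / (w + 1)) ^ (a + 1)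
  else 0

noncomputable def phi1 (U V W : ℝ) : ℝ := W + (W + 1) * U / V

noncomputable def phi2 (U V W : ℝ) : ℝ := W * V / U + W + 1

lemma map_withDensity_affine (a b : ℝ) (ha : a ≠ 0) (f : ℝ → ℝ≥0∞) (hf : Measurable f) :
    (volume.withDensity f).map (fun x => a * x + b) =
      volume.withDensity (fun y => ENNReal.ofReal |a⁻¹| * f (a⁻¹ * (y - b))) := by
  set e : ℝ ≃ᵐ ℝ :=
    ((Homeomorph.mulLeft₀ a ha).trans (Homeomorph.addRight b)).toMeasurableEquiv with he
  have hcoe : (fun x => a * x + b) = ⇑e := rfl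
  have hsymm : ⇑e.symm = fun y => a⁻¹ * (y - b) := rfl
  have hmapvol : volume.map e = ENNReal.ofReal |a⁻¹| • volume := by
    have h1 : ⇑e = (fun x => x + b) ∘ (a * ·) := rfl
    rw [h1, ← Measure.map_map (measurable_add_const b) (measurable_const_mul a),
      Real.map_volume_mul_left ha, Measure.map_smul, map_add_right_eq_self]
  rw [hcoe]
  ext s hs
  rw [Measure.map_apply e.measurable hs, withDensity_apply _ (e.measurable hs),
    withDensity_apply _ hs]
  have hrw : ∫⁻ y in s, ENNReal.ofReal |a⁻¹| * f (a⁻¹ * (y - b)) ∂volume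
      = ∫⁻ y in s, ENNReal.ofReal |a⁻¹| * f (e.symm y) ∂volume := by rw [hsymm]
  rw [hrw]
  have hmeas : Measurable fun y => f (e.symm y) := hf.comp e.symm.measurable
  calc ∫⁻ x in ⇑e ⁻¹' s, f x ∂volume
      = ∫⁻ x in ⇑e ⁻¹' s, f (e.symm (e x)) ∂volume := by simp
    _ = ∫⁻ y in s, f (e.symm y) ∂(volume.map e) := by
        rw [setLIntegral_map hs hmeas e.measurable]
    _ = ∫⁻ y in s, ENNReal.ofReal |a⁻¹| * f (e.symm y) ∂volume := by
        rw [hmapvol]; simp [Measure.restrict_smul, lintegral_smul_measure,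
          lintegral_const_mul _ hmeas]

/-- Conditional density of `(U',V')` given `(U,V) = (u,v)` for the Inverse-Beta map,
where `W ∼ 1/Beta(γ,β) - 1` is independent of `(U,V)`: the law of `U'` has density
`Γ(γ+β)/(Γ(γ)Γ(β)) · V·(-(u-v·U')/(v·U'+v))^β · ((u+v)/(v·U'+v))^γ / (v·U'-u)` (supported on
`v·U' > u`), and almost surely `V' = U'·v/u` (the δ-function part). Hypotheses `u > 0, v > 1`. -/
theorem phiIB_conditional_density
    {Ω : Type*} [MeasurableSpace Ω] (P : Measure Ω) [IsProbabilityMeasure P]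
    (γ β : ℝ) (hγ : 0 < γ) (hβ : 0 < β)
    (u v : ℝ) (hu : 0 < u) (hv : 1 < v)
    (W : Ω → ℝ) (hW : Measurable W)
    (hlawW : P.map W =
      volume.withDensity fun x => ENNReal.ofReal (invBetaShiftDensity γ β x)) :
    P.map (fun ω => phi1 u v (W ω)) =
      (volume.withDensity fun x => ENNReal.ofReal
        (if 0 < v * x - u then
          Gamma (γ + β) / (Gamma γ * Gamma β) *
            (v * (-((u - v * x) / (v * x + v))) ^ β * ((u + v) / (v * x + v)) ^ γ) / (v * x - u)
         else 0)) ∧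
    ∀ᵐ ω ∂P, phi2 u v (W ω) = phi1 u v (W ω) * v / u := by
  have hv0 : (0:ℝ) < v := lt_trans one_pos hv
  have huv : (0:ℝ) < u + v := by linarith
  set a : ℝ := (u + v) / v with hadef
  set b : ℝ := u / v with hbdef
  have ha0 : 0 < a := div_pos huv hv0
  have ha : a ≠ 0 := ne_of_gt ha0
  constructor
  · have hφ : (fun ω => phi1 u v (W ω)) = (fun x => a * x + b) ∘ W := by
      funext ω
      simp only [Function.comp, phi1, hadef, hbdef]
      field_simp
      ring
    have hdm0 : Measurable (invBetaShiftDensity γ β) := by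
      unfold invBetaShiftDensity
      apply Measurable.ite (measurableSet_lt measurable_const measurable_id) _ measurable_const
      fun_prop
    have hdm : Measurable fun x => ENNReal.ofReal (invBetaShiftDensity γ β x) :=
      ENNReal.measurable_ofReal.comp hdm0
    rw [hφ, ← Measure.map_map (by fun_prop) hW, hlawW, map_withDensity_affine a b ha _ hdm]
    congr 1
    funext x
    rw [← ENNReal.ofReal_mul (abs_nonneg _)]
    congr 1
    have hainv : |a⁻¹| = v / (u + v) := by
      rw [abs_of_pos (by positivity), hadef, inv_div]
    have hwx : a⁻¹ * (x - b) = (v * x - u) / (u + v) := by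
      rw [hadef, hbdef]
      field_simp
    rw [hainv, hwx]
    unfold invBetaShiftDensity
    have hiff : 0 < (v * x - u) / (u + v) ↔ 0 < v * x - u := by
      constructor
      · intro h; nlinarith [mul_pos h huv, div_mul_cancel₀ (v * x - u) (ne_of_gt huv)]
      · intro h; positivity
    split_ifs with h1 h2 h2
    · -- positive case
      have ht : 0 < v * x - u := hiff.mp h1
      have hs : 0 < v * x + v := by linarith
      have hA : (0:ℝ) < (v * x - u) / (v * x + v) := div_pos ht hs
      have hB : (0:ℝ) < (u + v) / (v * x + v) := div_pos huv hs
      have ew : (v * x - u) / (u + v) + 1 = (v * x + v) / (u + v) := by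
        field_simp
        ring
      have e2 : 1 / ((v * x - u) / (u + v) + 1) = (u + v) / (v * x + v) := by
        rw [ew, one_div, inv_div]
      have e1 : 1 - 1 / ((v * x - u) / (u + v) + 1) = (v * x - u) / (v * x + v) := by
        rw [e2]
        field_simp
        have hx1 : 0 < x + 1 := by nlinarith
        rw [eq_div_iff hx1.ne', sub_mul, div_mul_cancel₀ _ hx1.ne']
        ring
      have e3 : -((u - v * x) / (v * x + v)) = (v * x - u) / (v * x + v) := by ring
      rw [e1, e2, e3, Real.rpow_sub_one (ne_of_gt hA), Real.rpow_add_one (ne_of_gt hB)]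
      set X := ((v * x - u) / (v * x + v)) ^ β with hX
      set Y := ((u + v) / (v * x + v)) ^ γ with hY
      field_simp
      ring_nf
      have hx1 : 0 < 1 + x := by nlinarith
      rw [← add_mul, show X * x * Y + X * Y = X * Y * (1 + x) by ring, mul_assoc,
        mul_inv_cancel₀ hx1.ne', mul_one]
    · exact absurd (hiff.mp h1) h2
    · exact absurd (hiff.mpr h2) h1
    · simp
  · refine ae_of_all _ fun ω => ?_
    simp only [phi1, phi2]
    field_simp
    ring
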